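/- Let T, d_H, d_L, d_A be positive natural numbers, h : ZMod T → (Fin d_H → ℝ), c : ZMod T → (Fin d_L → ℝ), W_A ∈ Matrix (Fin d_A) (Fin d_L) ℝ, W_Gh ∈ Matrix (Fin d_H) (Fin d_H) ℝ, and λ₁ > 0. Define E(W_Ga) = (λ₁/2)·(1/T) Σ_t ‖h(t) − W_Gh.mulVec(h(t−1)) − W_Ga.mulVec(W_A.mulVec(c(t−1)))‖² for W_Ga ∈ Matrix (Fin d_H) (Fin d_A) ℝ. Then the gradient of E with respect to W_Ga equals λ₁ · (W_Ga * W_A * R_cL * W_Aᵀ − P * W_Aᵀ + W_Gh * Q * W_Aᵀ), where R_cL = (1/T) Σ_t c(t) c(t)ᵀ, P = (1/T) Σ_t h(t) c(t−1)ᵀ, and Q = (1/T) Σ_t h(t) c(t)ᵀ (outer products, indices cyclic mod T). -/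

import Mathlib

attribute [local instance] Matrix.normedAddCommGroup Matrix.normedSpace
open scoped Matrix

noncomputable def mvL (dH dA : ℕ) (a : Fin dA → ℝ) :
    Matrix (Fin dH) (Fin dA) ℝ →L[ℝ] EuclideanSpace ℝ (Fin dH) :=
  (((EuclideanSpace.equiv (Fin dH) ℝ).symm :
      (Fin dH → ℝ) ≃L[ℝ] EuclideanSpace ℝ (Fin dH)) :
      (Fin dH → ℝ) →L[ℝ] EuclideanSpace ℝ (Fin dH)).comp
    (LinearMap.toContinuousLinearMap
      { toFun := fun W : Matrix (Fin dH) (Fin dA) ℝ => W.mulVec a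
        map_add' := fun X Y => Matrix.add_mulVec X Y a
        map_smul' := fun r X => Matrix.smul_mulVec r X a })

lemma mvL_apply (dH dA : ℕ) (a : Fin dA → ℝ) (W : Matrix (Fin dH) (Fin dA) ℝ) :
    mvL dH dA a W = (EuclideanSpace.equiv (Fin dH) ℝ).symm (W.mulVec a) := rfl

lemma key_entry {m n p q : Type*} [Fintype n] [Fintype p]
    (M : Matrix m n ℝ) (u : n → ℝ) (v : p → ℝ) (B : Matrix q p ℝ) (i : m) (j : q) :
    (M * Matrix.vecMulVec u v * Bᵀ) i j = M.mulVec u i * B.mulVec v j := by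
  simp only [Matrix.mul_apply, Matrix.vecMulVec_apply, Matrix.transpose_apply,
    Matrix.mulVec, dotProduct, Finset.sum_mul, Finset.mul_sum]
  refine Finset.sum_congr rfl fun x _ => Finset.sum_congr rfl fun y _ => by ring

lemma key_entry2 {n p q : Type*} [Fintype p]
    (u : n → ℝ) (v : p → ℝ) (B : Matrix q p ℝ) (i : n) (j : q) :
    (Matrix.vecMulVec u v * Bᵀ) i j = u i * B.mulVec v j := by
  simp only [Matrix.mul_apply, Matrix.vecMulVec_apply, Matrix.transpose_apply,
    Matrix.mulVec, dotProduct, Finset.mul_sum]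
  exact Finset.sum_congr rfl fun x _ => by ring

lemma inner_std_mulVec (dH dA : ℕ) (i : Fin dH) (j : Fin dA) (a : Fin dA → ℝ)
    (x : EuclideanSpace ℝ (Fin dH)) :
    (inner ℝ x ((EuclideanSpace.equiv (Fin dH) ℝ).symm
      ((Matrix.single i j 1).mulVec a)) : ℝ) = x i * a j := by
  have hsym : ∀ (v : Fin dH → ℝ) (k : Fin dH),
      ((EuclideanSpace.equiv (Fin dH) ℝ).symm v) k = v k := fun _ _ => rfl
  simp only [PiLp.inner_apply, RCLike.inner_apply, conj_trivial, hsym,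
    Matrix.mulVec, dotProduct, Matrix.single, Matrix.of_apply]
  rw [Finset.sum_eq_single i]
  · simp [mul_comm]
  · intro k _ hk
    simp [hk.symm, Ne.symm hk]
  · simp

lemma inner_std_mulVec' (dH dA : ℕ) (i : Fin dH) (j : Fin dA) (a : Fin dA → ℝ)
    (x : EuclideanSpace ℝ (Fin dH)) :
    (inner ℝ ((EuclideanSpace.equiv (Fin dH) ℝ).symm
      ((Matrix.single i j 1).mulVec a)) x : ℝ) = x i * a j := by
  rw [real_inner_comm, inner_std_mulVec]

/-- Appendix A.1: gradient of the R-JEPA loss with respect to the action-branch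
predictor weight `W_Ga`: `∂E/∂W_Ga = λ₁ (W_Ga W_A R_cL W_Aᵀ − P W_Aᵀ + W_Gh Q W_Aᵀ)`,
where `R_cL` is the covariance of the low-level context and `P, Q` are
cross-correlation matrices, with cyclic time indexing mod `T`. -/
theorem rjepa_gradient_WGa
    (T dH dL dA : ℕ) [NeZero T] (hdH : 0 < dH) (hdL : 0 < dL) (hdA : 0 < dA)
    (h : ZMod T → EuclideanSpace ℝ (Fin dH))
    (c : ZMod T → Fin dL → ℝ)
    (WA : Matrix (Fin dA) (Fin dL) ℝ)
    (WGh : Matrix (Fin dH) (Fin dH) ℝ)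
    (lam1 : ℝ) (hlam : 0 < lam1)
    (E : Matrix (Fin dH) (Fin dA) ℝ → ℝ)
    (hE : ∀ WGa, E WGa = (lam1 / 2) * ((1 / (T : ℝ)) *
      ∑ t, ‖h t - (EuclideanSpace.equiv (Fin dH) ℝ).symm
          (WGh.mulVec (h (t - 1)) + WGa.mulVec (WA.mulVec (c (t - 1))))‖ ^ 2))
    (RcL : Matrix (Fin dL) (Fin dL) ℝ)
    (P Q : Matrix (Fin dH) (Fin dL) ℝ)
    (hRcL : RcL = (1 / (T : ℝ)) • ∑ t, Matrix.vecMulVec (c t) (c t))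
    (hP : P = (1 / (T : ℝ)) • ∑ t, Matrix.vecMulVec (h t) (c (t - 1)))
    (hQ : Q = (1 / (T : ℝ)) • ∑ t, Matrix.vecMulVec (h t) (c t)) :
    ∀ WGa : Matrix (Fin dH) (Fin dA) ℝ,
      (Matrix.of fun i j => fderiv ℝ E WGa (Matrix.single i j 1)) =
        lam1 • (WGa * WA * RcL * WAᵀ - P * WAᵀ + WGh * Q * WAᵀ) := by
  intro WGa
  set a : ZMod T → Fin dA → ℝ := fun t => WA.mulVec (c (t - 1)) with ha
  set b : ZMod T → EuclideanSpace ℝ (Fin dH) :=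
    fun t => h t - (EuclideanSpace.equiv (Fin dH) ℝ).symm (WGh.mulVec (h (t - 1))) with hb
  -- rewrite E in terms of inner products
  have hE' : E = fun W => (lam1 / 2) * ((1 / (T : ℝ)) *
      ∑ t, (inner ℝ (b t - mvL dH dA (a t) W) (b t - mvL dH dA (a t) W) : ℝ)) := by
    funext W
    rw [hE]
    congr 2
    refine Finset.sum_congr rfl fun t _ => ?_
    rw [real_inner_self_eq_norm_sq]
    congr 1
    simp only [hb, mvL_apply, ha, map_add, sub_add_eq_sub_sub]
  have hg : ∀ t : ZMod T,
      HasFDerivAt (fun W => b t - mvL dH dA (a t) W) (-(mvL dH dA (a t))) WGa :=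
    fun t => (mvL dH dA (a t)).hasFDerivAt.const_sub (b t)
  set D : ZMod T → (Matrix (Fin dH) (Fin dA) ℝ →L[ℝ] ℝ) := fun t =>
    (fderivInnerCLM ℝ (b t - mvL dH dA (a t) WGa, b t - mvL dH dA (a t) WGa)).comp
      ((-(mvL dH dA (a t))).prod (-(mvL dH dA (a t)))) with hD
  have hder : HasFDerivAt E ((lam1 / 2) • ((1 / (T : ℝ)) • ∑ t, D t)) WGa := by
    rw [hE']
    exact ((HasFDerivAt.fun_sum fun t _ => ((hg t).inner ℝ (hg t))).const_mul _).const_mul _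
  have hfd := hder.fderiv
  ext i j
  rw [Matrix.of_apply, hfd]
  -- evaluate the derivative at the standard basis matrix
  have hval : ∀ t : ZMod T, D t (Matrix.single i j 1) =
      2 * ((WGa.mulVec (a t) i - (h t i - WGh.mulVec (h (t - 1)) i)) * a t j) := by
    intro t
    have hsym : ∀ (v : Fin dH → ℝ) (k : Fin dH),
        ((EuclideanSpace.equiv (Fin dH) ℝ).symm v) k = v k := fun _ _ => rfl
    simp only [hD, ContinuousLinearMap.comp_apply, ContinuousLinearMap.prod_apply,
      ContinuousLinearMap.neg_apply, fderivInnerCLM_apply, mvL_apply,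
      inner_neg_left, inner_neg_right, real_inner_comm
        ((EuclideanSpace.equiv (Fin dH) ℝ).symm ((Matrix.single i j 1).mulVec (a t)))]
    rw [inner_std_mulVec']
    have hcomp : (b t - (EuclideanSpace.equiv (Fin dH) ℝ).symm (WGa.mulVec (a t))) i
        = (h t i - WGh.mulVec (h (t - 1)) i) - WGa.mulVec (a t) i := by
      simp only [hb, PiLp.sub_apply, hsym]
    rw [hcomp]
    ring
  -- entry formulas for the right-hand side
  have e1 : (WGa * WA * RcL * WAᵀ) i j
      = (1 / (T : ℝ)) * ∑ t, WGa.mulVec (a t) i * a t j := by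
    rw [hRcL, Matrix.mul_smul, Matrix.smul_mul, Matrix.mul_sum, Matrix.sum_mul]
    rw [show (∑ t, WGa.mulVec (a t) i * a t j)
        = ∑ t, (WGa * WA).mulVec (c t) i * WA.mulVec (c t) j from
      Fintype.sum_equiv (Equiv.subRight (1 : ZMod T)) _ _
        (fun t => by simp only [Equiv.subRight_apply, ha, Matrix.mulVec_mulVec])]
    simp only [Matrix.smul_apply, Matrix.sum_apply, smul_eq_mul, key_entry]
  have e2 : (P * WAᵀ) i j = (1 / (T : ℝ)) * ∑ t, h t i * a t j := by
    rw [hP, Matrix.smul_mul, Matrix.sum_mul]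
    simp only [Matrix.smul_apply, Matrix.sum_apply, smul_eq_mul, key_entry2, ha]
  have e3 : (WGh * Q * WAᵀ) i j
      = (1 / (T : ℝ)) * ∑ t, WGh.mulVec (h (t - 1)) i * a t j := by
    rw [hQ, Matrix.mul_smul, Matrix.smul_mul, Matrix.mul_sum, Matrix.sum_mul]
    rw [show (∑ t, WGh.mulVec (h (t - 1)) i * a t j)
        = ∑ t, (WGh * Matrix.vecMulVec (h t) (c t) * WAᵀ) i j from
      Fintype.sum_equiv (Equiv.subRight (1 : ZMod T)) _ _
        (fun t => by simp only [Equiv.subRight_apply, ha, key_entry])]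
    simp only [Matrix.smul_apply, Matrix.sum_apply, smul_eq_mul]
  simp only [ContinuousLinearMap.smul_apply, ContinuousLinearMap.sum_apply, smul_eq_mul,
    Matrix.smul_apply, Matrix.sub_apply, Matrix.add_apply]
  rw [Finset.sum_congr rfl (fun t _ => hval t), e1, e2, e3]
  rw [show (∑ t, 2 * ((WGa.mulVec (a t) i - (h t i - WGh.mulVec (h (t - 1)) i)) * a t j))
      = 2 * (∑ t, WGa.mulVec (a t) i * a t j) + (-2) * (∑ t, h t i * a t j)
        + 2 * (∑ t, WGh.mulVec (h (t - 1)) i * a t j) from by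
    rw [Finset.mul_sum, Finset.mul_sum, Finset.mul_sum, ← Finset.sum_add_distrib,
      ← Finset.sum_add_distrib]
    exact Finset.sum_congr rfl fun t _ => by ring]
  ring
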